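/- Let C be an additive category with exact structures D and E such that E is D-injectively generated. Then the class Flat(D-E) of D-E-flat objects satisfies ⊥_D(Flat(D-E)^{⊥_D}) = Flat(D-E). -/

import Mathlib

open CategoryTheory Limits ZeroObject

universe v u

variable {C : Type u} [CategoryTheory.Category.{v} C] [CategoryTheory.Preadditive C]
  [CategoryTheory.Limits.HasZeroObject C] [CategoryTheory.Limits.HasFiniteBiproducts C]

/-- An exact structure on an additive category in the sense of Quillen–Keller:
a class of kernel-cokernel pairs (conflations) satisfying the axioms
[E0], [E1], [E2], [E2ᵒᵖ]. -/
structure ExactStructure (C : Type u) [CategoryTheory.Category.{v} C]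
    [CategoryTheory.Preadditive C] [CategoryTheory.Limits.HasZeroObject C]
    [CategoryTheory.Limits.HasFiniteBiproducts C] where
  /-- the distinguished class of short exact sequences -/
  conf : ∀ ⦃X Y Z : C⦄, (X ⟶ Y) → (Y ⟶ Z) → Prop
  /-- every conflation is a kernel-cokernel pair -/
  kerCoker : ∀ {X Y Z : C} (i : X ⟶ Y) (d : Y ⟶ Z), conf i d →
    ∃ w : i ≫ d = 0,
      Nonempty (IsLimit (KernelFork.ofι i w)) ∧
      Nonempty (IsColimit (CokernelCofork.ofπ d w))
  /-- [E0] the identity of the zero object is a deflation -/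
  id_zero_deflation : ∃ (X : C) (i : X ⟶ (0 : C)), conf i (𝟙 (0 : C))
  /-- [E1] the composition of two deflations is a deflation -/
  comp_deflation : ∀ {Y Z W : C} (d : Y ⟶ Z) (e : Z ⟶ W),
    (∃ (X : C) (i : X ⟶ Y), conf i d) → (∃ (X : C) (i : X ⟶ Z), conf i e) →
    ∃ (X : C) (i : X ⟶ Y), conf i (d ≫ e)
  /-- [E2] pullbacks of deflations along arbitrary morphisms exist and are deflations -/
  pullback_deflation : ∀ {Y Z Z' : C} (d : Y ⟶ Z) (f : Z' ⟶ Z),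
    (∃ (X : C) (i : X ⟶ Y), conf i d) →
    ∃ (P : C) (p₁ : P ⟶ Y) (p₂ : P ⟶ Z') (comm : p₁ ≫ d = p₂ ≫ f),
      Nonempty (IsLimit (PullbackCone.mk p₁ p₂ comm)) ∧
      ∃ (X : C) (i : X ⟶ P), conf i p₂
  /-- [E2ᵒᵖ] pushouts of inflations along arbitrary morphisms exist and are inflations -/
  pushout_inflation : ∀ {X Y X' : C} (i : X ⟶ Y) (f : X ⟶ X'),
    (∃ (Z : C) (d : Y ⟶ Z), conf i d) →
    ∃ (Q : C) (q₁ : Y ⟶ Q) (q₂ : X' ⟶ Q) (comm : i ≫ q₁ = f ≫ q₂),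
      Nonempty (IsColimit (PushoutCocone.mk q₁ q₂ comm)) ∧
      ∃ (Z : C) (d : Q ⟶ Z), conf q₂ d

/-- `i` is an `E`-inflation. -/
def ExactStructure.Inflation (E : ExactStructure C) {X Y : C} (i : X ⟶ Y) : Prop :=
  ∃ (Z : C) (d : Y ⟶ Z), E.conf i d

/-- `d` is an `E`-deflation. -/
def ExactStructure.Deflation (E : ExactStructure C) {Y Z : C} (d : Y ⟶ Z) : Prop :=
  ∃ (X : C) (i : X ⟶ Y), E.conf i d

/-- `X` is `D`-`E`-divisible: every `D`-inflation starting at `X` is an `E`-inflation. -/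
def Divisible (D E : ExactStructure C) (X : C) : Prop :=
  ∀ {Y : C} (i : X ⟶ Y), D.Inflation i → E.Inflation i

/-- `Z` is `D`-`E`-flat: every `D`-deflation ending at `Z` is an `E`-deflation. -/
def Flat (D E : ExactStructure C) (Z : C) : Prop :=
  ∀ {Y : C} (d : Y ⟶ Z), D.Deflation d → E.Deflation d

/-- `Ext¹_D(Z, X) = 0`: every `D`-conflation `X ↣ Y ↠ Z` splits. -/
def ExtZero (D : ExactStructure C) (Z X : C) : Prop :=
  ∀ {Y : C} (i : X ⟶ Y) (d : Y ⟶ Z), D.conf i d → ∃ r : Y ⟶ X, i ≫ r = 𝟙 X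

/-- `X` is `D`-injective: every `D`-inflation starting at `X` splits. -/
def DInjective (D : ExactStructure C) (X : C) : Prop :=
  ∀ {Y Z : C} (i : X ⟶ Y) (d : Y ⟶ Z), D.conf i d → ∃ r : Y ⟶ X, i ≫ r = 𝟙 X

/-- `Z` is `D`-projective: every `D`-deflation ending at `Z` splits. -/
def DProjective (D : ExactStructure C) (Z : C) : Prop :=
  ∀ {X Y : C} (i : X ⟶ Y) (d : Y ⟶ Z), D.conf i d → ∃ s : Z ⟶ Y, s ≫ d = 𝟙 Z

/-- `E` is the exact structure `D`-projectively generated by `M`: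
its conflations are exactly the `D`-conflations with respect to which
every object of `M` is projective. -/
def ProjGenBy (D E : ExactStructure C) (M : Set C) : Prop :=
  ∀ {X Y Z : C} (i : X ⟶ Y) (d : Y ⟶ Z),
    E.conf i d ↔ (D.conf i d ∧ ∀ M' ∈ M, ∀ g : M' ⟶ Z, ∃ h : M' ⟶ Y, h ≫ d = g)

/-- `E` is the exact structure `D`-injectively generated by `M`:
its conflations are exactly the `D`-conflations with respect to which
every object of `M` is injective. -/
def InjGenBy (D E : ExactStructure C) (M : Set C) : Prop :=
  ∀ {X Y Z : C} (i : X ⟶ Y) (d : Y ⟶ Z),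
    E.conf i d ↔ (D.conf i d ∧ ∀ M' ∈ M, ∀ g : X ⟶ M', ∃ h : Y ⟶ M', i ≫ h = g)

/-- `𝓐^{⊥_D}`. -/
def rightPerp (D : ExactStructure C) (A : Set C) : Set C :=
  {X | ∀ a ∈ A, ExtZero D a X}

/-- `^{⊥_D}𝓐`. -/
def leftPerp (D : ExactStructure C) (A : Set C) : Set C :=
  {X | ∀ a ∈ A, ExtZero D X a}

/-- `(𝓐, 𝓑)` is a `D`-cotorsion pair. -/
def CotorsionPair (D : ExactStructure C) (A B : Set C) : Prop :=
  rightPerp D A = B ∧ leftPerp D B = A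

/-- `C` has enough `D`-injectives. -/
def EnoughInjectives (D : ExactStructure C) : Prop :=
  ∀ X : C, ∃ (Y Z : C) (i : X ⟶ Y) (d : Y ⟶ Z), D.conf i d ∧ DInjective D Y

/-- `C` has enough `D`-projectives. -/
def EnoughProjectives (D : ExactStructure C) : Prop :=
  ∀ Z : C, ∃ (X Y : C) (i : X ⟶ Y) (d : Y ⟶ Z), D.conf i d ∧ DProjective D Y

/-- If `E` is `D`-injectively generated, then
`⊥_D(Flat(D-E)^{⊥_D}) = Flat(D-E)`. -/
theorem leftPerp_rightPerp_flat
    (D E : ExactStructure C) (hE : ∃ M : Set C, InjGenBy D E M) :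
    leftPerp D (rightPerp D {Z : C | Flat D E Z}) = {Z : C | Flat D E Z} := by
  obtain ⟨M, hM⟩ := hE
  apply Set.Subset.antisymm
  · intro Z hZ
    intro Y d hd
    obtain ⟨X, i, hconf⟩ := hd
    refine ⟨X, i, (hM i d).mpr ⟨hconf, ?_⟩⟩
    intro M' hM' g
    -- push out the conflation along g
    obtain ⟨Q, q₁, q₂, comm, ⟨hpo⟩, Z', d', hconf'⟩ :=
      D.pushout_inflation i g ⟨Z, d, hconf⟩
    obtain ⟨w, ⟨hker⟩, ⟨hcoker⟩⟩ := D.kerCoker i d hconf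
    obtain ⟨w', ⟨hker'⟩, ⟨hcoker'⟩⟩ := D.kerCoker q₂ d' hconf'
    -- d is epi (it is a cokernel)
    haveI hepi_d : Epi d := by
      have := epi_of_isColimit_cofork hcoker
      simpa using this
    -- the map u : Q ⟶ Z induced by the pushout
    have hid : i ≫ d = g ≫ (0 : M' ⟶ Z) := by simp [w]
    set u : Q ⟶ Z := PushoutCocone.IsColimit.desc hpo d 0 hid with hu
    have hq₁u : q₁ ≫ u = d := by
      have := PushoutCocone.IsColimit.inl_desc hpo d 0 hid
      exact this
    have hq₂u : q₂ ≫ u = 0 := by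
      have := PushoutCocone.IsColimit.inr_desc hpo d 0 hid
      exact this
    haveI hepi_u : Epi u := by
      rw [← hq₁u] at hepi_d
      exact epi_of_epi q₁ u
    -- u is a cokernel of q₂
    have hu_colim : IsColimit (CokernelCofork.ofπ u hq₂u) := by
      refine CokernelCofork.IsColimit.ofπ' u hq₂u ?_
      intro A v hv
      have hiv : i ≫ (q₁ ≫ v) = 0 := by
        rw [← Category.assoc, comm, Category.assoc, hv, comp_zero]
      -- factor q₁ ≫ v through d
      obtain ⟨t, ht⟩ :=
        CokernelCofork.IsColimit.desc' hcoker (q₁ ≫ v) hiv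
      simp only [Cofork.π_ofπ] at ht
      refine ⟨t, ?_⟩
      apply PushoutCocone.IsColimit.hom_ext hpo
      · exact (Category.assoc _ _ _).symm.trans ((congrArg (· ≫ t) hq₁u).trans ht)
      · exact (Category.assoc _ _ _).symm.trans ((congrArg (· ≫ t) hq₂u).trans (zero_comp.trans hv.symm))
    -- hence Z' ≅ Z
    let φ : Z' ≅ Z := IsColimit.coconePointUniqueUpToIso hcoker' hu_colim
    -- pull back d' along φ.inv : Z ⟶ Z'
    obtain ⟨P, p₁, p₂, comm2, ⟨hpl⟩, X₂, i₂, hconf₂⟩ :=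
      D.pullback_deflation d' φ.inv ⟨M', q₂, hconf'⟩
    obtain ⟨w₂, ⟨hker₂⟩, -⟩ := D.kerCoker i₂ p₂ hconf₂
    -- p₁ is an iso, since we pulled back along an iso
    have myeq : (𝟙 Q) ≫ d' = (d' ≫ φ.hom) ≫ φ.inv := by simp
    have myLim : IsLimit (PullbackCone.mk (𝟙 Q) (d' ≫ φ.hom) myeq) := by
      refine PullbackCone.IsLimit.mk myeq (fun s => s.fst) (fun s => by simp)
        (fun s => ?_) (fun s m h1 _ => by simpa using h1)
      have := s.condition
      rw [← Category.assoc, this]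
      simp
    have hp₁eq : p₁ = (IsLimit.conePointUniqueUpToIso hpl myLim).hom := by
      have := IsLimit.conePointUniqueUpToIso_hom_comp hpl myLim WalkingCospan.left
      exact this.symm.trans (Category.comp_id _)
    haveI hp₁iso : IsIso p₁ := by rw [hp₁eq]; exact Iso.isIso_hom _
    have hp₂eq : p₂ = p₁ ≫ d' ≫ φ.hom := by
      rw [← Category.assoc, comm2]
      simp
    -- i₂ ≫ p₁ is a kernel of d'
    have wγ : (i₂ ≫ p₁) ≫ d' = 0 := by
      rw [Category.assoc, comm2, ← Category.assoc, w₂, zero_comp]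
    haveI : Mono i₂ := by
      have := mono_of_isLimit_fork hker₂
      simpa using this
    haveI : Mono (i₂ ≫ p₁) := mono_comp _ _
    have myKer : IsLimit (KernelFork.ofι (i₂ ≫ p₁) wγ) := by
      refine KernelFork.IsLimit.ofι' (i₂ ≫ p₁) wγ ?_
      intro A k hk
      have hk2 : (k ≫ inv p₁) ≫ p₂ = 0 := by
        rw [hp₂eq]
        simp only [Category.assoc, IsIso.inv_hom_id_assoc]
        rw [← Category.assoc, hk, zero_comp]
      obtain ⟨l, hl⟩ := KernelFork.IsLimit.lift' hker₂ (k ≫ inv p₁) hk2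
      simp only [Fork.ι_ofι] at hl
      refine ⟨l, ?_⟩
      rw [← Category.assoc, hl]
      simp
    -- the iso γ : X₂ ≅ M' between the two kernels of d'
    let γ : X₂ ≅ M' := IsLimit.conePointUniqueUpToIso myKer hker'
    have hγ : γ.hom ≫ q₂ = i₂ ≫ p₁ := by
      have := IsLimit.conePointUniqueUpToIso_hom_comp myKer hker'
        WalkingParallelPair.zero
      simpa [γ] using this
    -- X₂ is in the right perpendicular of the flats
    have hX₂ : X₂ ∈ rightPerp D {Z : C | Flat D E Z} := by
      intro F hF W j e hje
      obtain ⟨X₃, i₃, hE3⟩ := hF e ⟨X₂, j, hje⟩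
      obtain ⟨hD3, hext⟩ := (hM i₃ e).mp hE3
      obtain ⟨w3, ⟨hker3⟩, -⟩ := D.kerCoker i₃ e hD3
      obtain ⟨wj, ⟨hkerj⟩, -⟩ := D.kerCoker j e hje
      let ψ : X₂ ≅ X₃ := IsLimit.conePointUniqueUpToIso hkerj hker3
      have hψ : ψ.hom ≫ i₃ = j := by
        have := IsLimit.conePointUniqueUpToIso_hom_comp hkerj hker3
          WalkingParallelPair.zero
        simpa [ψ] using this
      obtain ⟨h', hh'⟩ := hext M' hM' (ψ.inv ≫ γ.hom)
      refine ⟨h' ≫ γ.inv, ?_⟩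
      rw [← hψ, Category.assoc, ← Category.assoc i₃, hh']
      simp
    -- split the conflation X₂ ↣ P ↠ Z using the hypothesis on Z
    obtain ⟨r₂, hr₂⟩ := hZ X₂ hX₂ i₂ p₂ hconf₂
    refine ⟨q₁ ≫ inv p₁ ≫ r₂ ≫ γ.hom, ?_⟩
    have hq₂' : q₂ = γ.inv ≫ i₂ ≫ p₁ := by rw [← hγ]; simp
    rw [← Category.assoc, comm, Category.assoc, hq₂']
    simp only [Category.assoc, IsIso.hom_inv_id_assoc]
    rw [← Category.assoc i₂ r₂, hr₂]
    simp
  · intro Z hZ a ha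
    exact ha Z hZ
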